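/- Let d ≥ 2. There exists δ > 0 with the following property. Let ϱ : S^{d−1} → (0,∞) be a function such that its 0-homogeneous extension F : ℝ^d ∖ {0} → ℝ, F(x) = ϱ(x/‖x‖), is of class C², and suppose that sup_{‖x‖=1} ( |F(x) − 1| + ‖DF(x)‖ + ‖D²F(x)‖ ) ≤ δ. Then the star body K = {sω : ω ∈ S^{d−1}, 0 ≤ s ≤ ϱ(ω)} with radial function ϱ is convex (hence a convex body containing 0 in its interior). -/

import Mathlib

open Metric Filter Topology Set
open scoped RealInnerProductSpace


namespace StarBodyAux

variable {E : Type*} [NormedAddCommGroup E] [NormedSpace ℝ E]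

theorem fderiv_homog {F : E → ℝ}
    (hhom : ∀ x : E, x ≠ 0 → ∀ c : ℝ, 0 < c → F (c • x) = F x)
    (hF : ContDiffOn ℝ 2 F {(0:E)}ᶜ) {x : E} (hx : x ≠ 0) {c : ℝ} (hc : 0 < c) :
    fderiv ℝ F (c • x) = c⁻¹ • fderiv ℝ F x := by
  have hop : IsOpen {(0:E)}ᶜ := isOpen_compl_singleton
  have hdiff : ∀ z : E, z ≠ 0 → DifferentiableAt ℝ F z := fun z hz =>
    (hF.contDiffAt (hop.mem_nhds hz)).differentiableAt two_ne_zero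
  have hcx : c • x ≠ 0 := smul_ne_zero (ne_of_gt hc) hx
  have hm : HasFDerivAt (fun y : E => c • y) (c • ContinuousLinearMap.id ℝ E) x := by
    exact (hasFDerivAt_id x).const_smul c
  have hcomp : HasFDerivAt (F ∘ fun y : E => c • y)
      ((fderiv ℝ F (c • x)).comp (c • ContinuousLinearMap.id ℝ E)) x :=
    (hdiff _ hcx).hasFDerivAt.comp x hm
  have heq : (F ∘ fun y : E => c • y) =ᶠ[𝓝 x] F := by
    filter_upwards [hop.mem_nhds hx] with y hy
    exact hhom y hy c hc
  have h2 : HasFDerivAt F ((fderiv ℝ F (c • x)).comp (c • ContinuousLinearMap.id ℝ E)) x :=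
    hcomp.congr_of_eventuallyEq heq.symm
  have h3 : (fderiv ℝ F (c • x)).comp (c • ContinuousLinearMap.id ℝ E)
      = c • fderiv ℝ F (c • x) := by
    ext y; simp [ContinuousLinearMap.comp_apply, map_smul]
  have h4 : c • fderiv ℝ F (c • x) = fderiv ℝ F x := by
    rw [← h3]; exact h2.fderiv.symm
  calc fderiv ℝ F (c • x) = c⁻¹ • (c • fderiv ℝ F (c • x)) := by
        rw [inv_smul_smul₀ (ne_of_gt hc)]
    _ = c⁻¹ • fderiv ℝ F x := by rw [h4]

theorem fderiv2_homog {F : E → ℝ}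
    (hhom : ∀ x : E, x ≠ 0 → ∀ c : ℝ, 0 < c → F (c • x) = F x)
    (hF : ContDiffOn ℝ 2 F {(0:E)}ᶜ) {x : E} (hx : x ≠ 0) {c : ℝ} (hc : 0 < c) :
    fderiv ℝ (fderiv ℝ F) (c • x) = (c⁻¹ * c⁻¹) • fderiv ℝ (fderiv ℝ F) x := by
  have hop : IsOpen {(0:E)}ᶜ := isOpen_compl_singleton
  set Φ := fderiv ℝ F with hΦdef
  have hΦc : ContDiffOn ℝ 1 Φ {(0:E)}ᶜ := hF.fderiv_of_isOpen hop (by norm_num)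
  have hdiffΦ : ∀ z : E, z ≠ 0 → DifferentiableAt ℝ Φ z := fun z hz =>
    (hΦc.contDiffAt (hop.mem_nhds hz)).differentiableAt one_ne_zero
  have hcx : c • x ≠ 0 := smul_ne_zero (ne_of_gt hc) hx
  have hm : HasFDerivAt (fun y : E => c • y) (c • ContinuousLinearMap.id ℝ E) x := by
    exact (hasFDerivAt_id x).const_smul c
  have hcomp : HasFDerivAt (Φ ∘ fun y : E => c • y)
      ((fderiv ℝ Φ (c • x)).comp (c • ContinuousLinearMap.id ℝ E)) x :=
    (hdiffΦ _ hcx).hasFDerivAt.comp x hm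
  have heq : (Φ ∘ fun y : E => c • y) =ᶠ[𝓝 x] (fun y => c⁻¹ • Φ y) := by
    filter_upwards [hop.mem_nhds hx] with y hy
    exact fderiv_homog hhom hF hy hc
  have h2 : HasFDerivAt (fun y => c⁻¹ • Φ y)
      ((fderiv ℝ Φ (c • x)).comp (c • ContinuousLinearMap.id ℝ E)) x :=
    hcomp.congr_of_eventuallyEq heq.symm
  have h2' : HasFDerivAt (fun y => c⁻¹ • Φ y) (c⁻¹ • fderiv ℝ Φ x) x :=
    (hdiffΦ x hx).hasFDerivAt.const_smul c⁻¹
  have h3 : (fderiv ℝ Φ (c • x)).comp (c • ContinuousLinearMap.id ℝ E)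
      = c • fderiv ℝ Φ (c • x) := by
    ext y; simp [ContinuousLinearMap.comp_apply, map_smul]
  have h4 : c • fderiv ℝ Φ (c • x) = c⁻¹ • fderiv ℝ Φ x := by
    rw [← h3]; exact h2.unique h2'
  calc fderiv ℝ Φ (c • x) = c⁻¹ • (c • fderiv ℝ Φ (c • x)) := by
        rw [inv_smul_smul₀ (ne_of_gt hc)]
    _ = (c⁻¹ * c⁻¹) • fderiv ℝ Φ x := by rw [h4, smul_smul]

theorem arith {V a PB NB NC : ℝ} (ha1 : 99/100 ≤ a) (ha0 : 0 < a)
    (hPB : PB ≤ 2*((1/100)*V*V)) (hNC : NC ≤ (1/100)*V^2) (hNB : 0 ≤ 6*NB) :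
    0 ≤ (V^2+V^2)*a^2 - 4*PB*a + 6*NB - 2*NC*a := by
  nlinarith [mul_le_mul_of_nonneg_right hPB ha0.le, mul_le_mul_of_nonneg_right hNC ha0.le,
    mul_nonneg (mul_nonneg (sq_nonneg V) ha0.le) (sub_nonneg.2 ha1),
    mul_nonneg (sq_nonneg V) ha0.le]

end StarBodyAux

set_option maxHeartbeats 1000000 in
/-- **Star bodies with radial function `C²`-close to `1` are convex.**
For `d ≥ 2` there is `δ > 0` such that: if `ϱ : S^{d−1} → (0,∞)` has `0`-homogeneous
extension `F` (i.e. `F (c • x) = F x` for `c > 0`, `x ≠ 0`) of class `C²` on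
`ℝ^d ∖ {0}` with `sup_{‖x‖=1} (|F x − 1| + ‖DF x‖ + ‖D²F x‖) ≤ δ`, then the star body
`K = {s • ω : ω ∈ S^{d−1}, 0 ≤ s ≤ F ω}` is convex. -/
theorem starBody_convex_of_C2_close_to_ball (d : ℕ) (hd : 2 ≤ d) :
    ∃ δ > (0 : ℝ),
      ∀ F : EuclideanSpace ℝ (Fin d) → ℝ,
        (∀ x : EuclideanSpace ℝ (Fin d), x ≠ 0 → ∀ c : ℝ, 0 < c → F (c • x) = F x) →
        ContDiffOn ℝ 2 F {(0 : EuclideanSpace ℝ (Fin d))}ᶜ →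
        (∀ x ∈ sphere (0 : EuclideanSpace ℝ (Fin d)) 1, 0 < F x) →
        (∀ x ∈ sphere (0 : EuclideanSpace ℝ (Fin d)) 1,
          |F x - 1| + ‖fderiv ℝ F x‖ + ‖fderiv ℝ (fderiv ℝ F) x‖ ≤ δ) →
        Convex ℝ {y : EuclideanSpace ℝ (Fin d) |
          ∃ ω ∈ sphere (0 : EuclideanSpace ℝ (Fin d)) 1,
            ∃ s : ℝ, 0 ≤ s ∧ s ≤ F ω ∧ y = s • ω} := by
  refine ⟨1/100, by norm_num, ?_⟩
  intro F hhom hF hpos hbound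
  have hE : True := trivial
  have hop : IsOpen {(0:EuclideanSpace ℝ (Fin d))}ᶜ := isOpen_compl_singleton
  have hdiffF : ∀ z : EuclideanSpace ℝ (Fin d), z ≠ 0 → DifferentiableAt ℝ F z := fun z hz =>
    (hF.contDiffAt (hop.mem_nhds hz)).differentiableAt two_ne_zero
  have hΦc : ContDiffOn ℝ 1 (fderiv ℝ F) {(0:EuclideanSpace ℝ (Fin d))}ᶜ := hF.fderiv_of_isOpen hop (by norm_num)
  have hdiffΦ : ∀ z : EuclideanSpace ℝ (Fin d), z ≠ 0 → DifferentiableAt ℝ (fderiv ℝ F) z := fun z hz =>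
    (hΦc.contDiffAt (hop.mem_nhds hz)).differentiableAt one_ne_zero
  -- the key pointwise bounds away from the sphere
  have key : ∀ x : EuclideanSpace ℝ (Fin d), x ≠ 0 →
      |F x - 1| ≤ 1/100 ∧ ‖x‖ * ‖fderiv ℝ F x‖ ≤ 1/100 ∧
        ‖x‖^2 * ‖fderiv ℝ (fderiv ℝ F) x‖ ≤ 1/100 := by
    intro x hx
    have hr : 0 < ‖x‖ := norm_pos_iff.2 hx
    set u : EuclideanSpace ℝ (Fin d) := ‖x‖⁻¹ • x with hu_def
    have hnu : ‖u‖ = 1 := by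
      rw [hu_def, norm_smul, Real.norm_eq_abs, abs_inv, abs_of_pos hr, inv_mul_cancel₀ hr.ne']
    have hune : u ≠ 0 := by intro h; rw [h, norm_zero] at hnu; norm_num at hnu
    have hxu : ‖x‖ • u = x := smul_inv_smul₀ hr.ne' x
    have husph : u ∈ sphere (0:EuclideanSpace ℝ (Fin d)) 1 := by rwa [mem_sphere_zero_iff_norm]
    have hb := hbound u husph
    have h1 : |F u - 1| ≤ 1/100 := by
      have := norm_nonneg (fderiv ℝ F u); have := norm_nonneg (fderiv ℝ (fderiv ℝ F) u); linarith
    have h2 : ‖fderiv ℝ F u‖ ≤ 1/100 := by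
      have := abs_nonneg (F u - 1); have := norm_nonneg (fderiv ℝ (fderiv ℝ F) u); linarith
    have h3 : ‖fderiv ℝ (fderiv ℝ F) u‖ ≤ 1/100 := by
      have := abs_nonneg (F u - 1); have := norm_nonneg (fderiv ℝ F u); linarith
    have hFx : F x = F u := by
      have h := hhom u hune ‖x‖ hr; rwa [hxu] at h
    have hD1 : fderiv ℝ F x = ‖x‖⁻¹ • fderiv ℝ F u := by
      have h := StarBodyAux.fderiv_homog hhom hF hune hr (c := ‖x‖); rwa [hxu] at h
    have hD2 : fderiv ℝ (fderiv ℝ F) x = (‖x‖⁻¹ * ‖x‖⁻¹) • fderiv ℝ (fderiv ℝ F) u := by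
      have h := StarBodyAux.fderiv2_homog hhom hF hune hr (c := ‖x‖); rwa [hxu] at h
    refine ⟨by rwa [hFx], ?_, ?_⟩
    · rw [hD1, norm_smul, Real.norm_eq_abs, abs_inv, abs_of_pos hr, ← mul_assoc,
        mul_inv_cancel₀ hr.ne', one_mul]
      exact h2
    · have hnorm : ‖fderiv ℝ (fderiv ℝ F) x‖ = ‖x‖⁻¹ * ‖x‖⁻¹ * ‖fderiv ℝ (fderiv ℝ F) u‖ := by
        have hns : ‖(‖x‖⁻¹ * ‖x‖⁻¹) • fderiv ℝ (fderiv ℝ F) u‖ = ‖‖x‖⁻¹ * ‖x‖⁻¹‖ * ‖fderiv ℝ (fderiv ℝ F) u‖ := by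
          exact @norm_smul _ _ _ _ _ (NormedSpace.toNormSMulClass (𝕜 := ℝ) (E := EuclideanSpace ℝ (Fin d) →L[ℝ] EuclideanSpace ℝ (Fin d) →L[ℝ] ℝ)) _ _
        rw [hD2, hns]
        simp [Real.norm_eq_abs, abs_mul, abs_inv, abs_of_pos hr]
      rw [hnorm]
      have heq : ‖x‖^2 * (‖x‖⁻¹ * ‖x‖⁻¹ * ‖fderiv ℝ (fderiv ℝ F) u‖)
          = ‖fderiv ℝ (fderiv ℝ F) u‖ := by
        field_simp
      rw [heq]; exact h3
  have hFge : ∀ x : EuclideanSpace ℝ (Fin d), x ≠ 0 → (99:ℝ)/100 ≤ F x := by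
    intro x hx
    have := (abs_le.mp (key x hx).1).1
    linarith
  -- membership helpers
  set K := {y : EuclideanSpace ℝ (Fin d) | ∃ ω ∈ sphere (0 : EuclideanSpace ℝ (Fin d)) 1, ∃ s : ℝ, 0 ≤ s ∧ s ≤ F ω ∧ y = s • ω} with hK
  have hmem : ∀ y : EuclideanSpace ℝ (Fin d), y ≠ 0 → ‖y‖ ≤ F y → y ∈ K := by
    intro y hy hle
    have hr : 0 < ‖y‖ := norm_pos_iff.2 hy
    have hnu : ‖(‖y‖⁻¹ • y : EuclideanSpace ℝ (Fin d))‖ = 1 := by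
      rw [norm_smul, Real.norm_eq_abs, abs_inv, abs_of_pos hr, inv_mul_cancel₀ hr.ne']
    have hune : (‖y‖⁻¹ • y : EuclideanSpace ℝ (Fin d)) ≠ 0 := by
      intro h; rw [h, norm_zero] at hnu; norm_num at hnu
    have hxu : ‖y‖ • (‖y‖⁻¹ • y) = y := smul_inv_smul₀ hr.ne' y
    have hFu : F (‖y‖⁻¹ • y) = F y := by
      conv_rhs => rw [← hxu]
      exact (hhom _ hune ‖y‖ hr).symm
    exact ⟨‖y‖⁻¹ • y, by rwa [mem_sphere_zero_iff_norm], ‖y‖, norm_nonneg y,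
      by rwa [hFu], hxu.symm⟩
  have hK0 : (0:EuclideanSpace ℝ (Fin d)) ∈ K := by
    haveI : Nonempty (Fin d) := ⟨⟨0, by omega⟩⟩
    obtain ⟨ω, hω⟩ : (sphere (0:EuclideanSpace ℝ (Fin d)) 1).Nonempty := NormedSpace.sphere_nonempty.mpr zero_le_one
    exact ⟨ω, hω, 0, le_refl 0, (hpos ω hω).le, (zero_smul ℝ ω).symm⟩
  have hval : ∀ y : EuclideanSpace ℝ (Fin d), y ∈ K → y ≠ 0 → ‖y‖ ≤ F y := by
    rintro y ⟨ω, hω, s, hs0, hsF, rfl⟩ hy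
    have hω1 : ‖ω‖ = 1 := mem_sphere_zero_iff_norm.mp hω
    have hωne : ω ≠ 0 := by intro h; rw [h, norm_zero] at hω1; norm_num at hω1
    have hs : 0 < s := by
      rcases hs0.lt_or_eq with h | h
      · exact h
      · exact absurd (by rw [← h, zero_smul]) hy
    have hns : ‖s • ω‖ = s := by
      rw [norm_smul, Real.norm_eq_abs, abs_of_pos hs, hω1, mul_one]
    rw [hns, hhom ω hωne s hs]
    exact hsF
  have hscale : ∀ y : EuclideanSpace ℝ (Fin d), y ∈ K → ∀ t : ℝ, 0 ≤ t → t ≤ 1 → t • y ∈ K := by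
    rintro y ⟨ω, hω, s, hs0, hsF, rfl⟩ t ht0 ht1
    exact ⟨ω, hω, t * s, mul_nonneg ht0 hs0,
      le_trans (mul_le_of_le_one_left hs0 ht1) hsF, (smul_smul t s ω)⟩
  -- now the convexity
  intro y1 hy1 y2 hy2 α β hα hβ hαβ
  by_cases hseg : ∀ t ∈ Set.Icc (0:ℝ) 1, y1 + t • (y2 - y1) ≠ 0
  · -- main case: segment avoids the origin
    set v : EuclideanSpace ℝ (Fin d) := y2 - y1 with hv_def
    set γ : ℝ → EuclideanSpace ℝ (Fin d) := fun t => y1 + t • v with hγ_def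
    have hγd : ∀ t : ℝ, HasDerivAt γ v t := by
      intro t
      have h1 : HasDerivAt (fun s : ℝ => s • v) ((1:ℝ) • v) t := (hasDerivAt_id t).smul_const v
      have h2 := h1.const_add y1
      have h3 : HasDerivAt (fun s : ℝ => y1 + s • v) v t := by simpa using h2
      exact h3
    have hγcont : Continuous γ := continuous_const.add (continuous_id.smul continuous_const)
    have hSopen : IsOpen {t : ℝ | γ t ≠ 0} := by
      have he : {t : ℝ | γ t ≠ 0} = γ ⁻¹' {(0 : EuclideanSpace ℝ (Fin d))}ᶜ := rfl
      rw [he]; exact hop.preimage hγcont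
    set f : ℝ → ℝ := fun t => F (γ t) with hf_def
    set b : ℝ → ℝ := fun t => fderiv ℝ F (γ t) v with hb_def
    set c2 : ℝ → ℝ := fun t => (fderiv ℝ (fderiv ℝ F) (γ t) v) v with hc2_def
    set n : ℝ → ℝ := fun t => ⟪γ t, γ t⟫ with hn_def
    set p : ℝ → ℝ := fun t => ⟪γ t, v⟫ + ⟪v, γ t⟫ with hp_def
    set g : ℝ → ℝ := fun t => n t * ((f t)⁻¹ * (f t)⁻¹) with hg_def
    set D1 : ℝ → ℝ := fun t => p t * ((f t)⁻¹ * (f t)⁻¹) - 2 * (n t * b t) * (f t)⁻¹ ^ 3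
      with hD1_def
    set D2 : ℝ → ℝ := fun t => (⟪v, v⟫ + ⟪v, v⟫) * ((f t)⁻¹ * (f t)⁻¹)
        - 4 * (p t * b t) * (f t)⁻¹ ^ 3 + 6 * (n t * b t ^ 2) * (f t)⁻¹ ^ 4
        - 2 * (n t * c2 t) * (f t)⁻¹ ^ 3 with hD2_def
    have hfpos : ∀ t : ℝ, γ t ≠ 0 → (99:ℝ)/100 ≤ f t := fun t ht => hFge (γ t) ht
    have hfne : ∀ t : ℝ, γ t ≠ 0 → f t ≠ 0 := fun t ht =>
      ne_of_gt (lt_of_lt_of_le (by norm_num) (hfpos t ht))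
    have hfd : ∀ t : ℝ, γ t ≠ 0 → HasDerivAt f (b t) t := fun t ht =>
      (hdiffF _ ht).hasFDerivAt.comp_hasDerivAt t (hγd t)
    have hbd : ∀ t : ℝ, γ t ≠ 0 → HasDerivAt b (c2 t) t := by
      intro t ht
      have h1 : HasDerivAt (fun s => fderiv ℝ F (γ s)) (fderiv ℝ (fderiv ℝ F) (γ t) v) t :=
        (hdiffΦ _ ht).hasFDerivAt.comp_hasDerivAt t (hγd t)
      have h2 := h1.clm_apply (hasDerivAt_const t v)
      simpa using h2
    have hnd : ∀ t : ℝ, HasDerivAt n (p t) t := fun t => (hγd t).inner ℝ (hγd t)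
    have hpd : ∀ t : ℝ, HasDerivAt p (⟪v, v⟫ + ⟪v, v⟫) t := by
      intro t
      have h1 : HasDerivAt (fun s => ⟪γ s, v⟫) (⟪v, v⟫) t := by
        have := (hγd t).inner ℝ (hasDerivAt_const t v)
        simpa using this
      have h2 : HasDerivAt (fun s => ⟪v, γ s⟫) (⟪v, v⟫) t := by
        have := (hasDerivAt_const t v).inner ℝ (hγd t)
        simpa using this
      exact h1.add h2
    have hgd : ∀ t : ℝ, γ t ≠ 0 → HasDerivAt g (D1 t) t := by
      intro t ht
      have ha := hfne t ht
      have h : HasDerivAt g _ t := (hnd t).mul (((hfd t ht).inv ha).mul ((hfd t ht).inv ha))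
      convert h using 1
      simp only [hD1_def, inv_pow, Pi.mul_apply, Pi.inv_apply, Pi.pow_apply]
      field_simp
      ring
    have hD1d : ∀ t : ℝ, γ t ≠ 0 → HasDerivAt D1 (D2 t) t := by
      intro t ht
      have ha := hfne t ht
      have h : HasDerivAt D1 _ t := ((hpd t).mul (((hfd t ht).inv ha).mul ((hfd t ht).inv ha))).sub
        ((((hnd t).mul (hbd t ht)).const_mul 2).mul (((hfd t ht).inv ha).pow 3))
      convert h using 1
      simp only [hD2_def, inv_pow, Pi.mul_apply, Pi.inv_apply, Pi.pow_apply]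
      field_simp
      ring
    have hD2nonneg : ∀ t : ℝ, γ t ≠ 0 → 0 ≤ D2 t := by
      intro t ht
      obtain ⟨hk1, hk2, hk3⟩ := key (γ t) ht
      have ha1 : (99:ℝ)/100 ≤ f t := hfpos t ht
      have ha0 : (0:ℝ) < f t := lt_of_lt_of_le (by norm_num) ha1
      have ha2 : f t ≤ 101/100 := by
        have := (abs_le.mp hk1).2
        simp only [hf_def]
        linarith
      have hrr : 0 < ‖γ t‖ := norm_pos_iff.2 ht
      have hnt : n t = ‖γ t‖ ^ 2 := real_inner_self_eq_norm_sq (γ t)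
      have hvv : ⟪v, v⟫ = ‖v‖ ^ 2 := real_inner_self_eq_norm_sq v
      have hpabs : |p t| ≤ 2 * (‖γ t‖ * ‖v‖) := by
        have h1 := abs_real_inner_le_norm (γ t) v
        have h2 := abs_real_inner_le_norm v (γ t)
        calc |p t| ≤ |⟪γ t, v⟫| + |⟪v, γ t⟫| := abs_add_le _ _
          _ ≤ 2 * (‖γ t‖ * ‖v‖) := by nlinarith [h1, h2]
      have hbabs : ‖γ t‖ * |b t| ≤ (1/100) * ‖v‖ := by
        have h1 : |b t| ≤ ‖fderiv ℝ F (γ t)‖ * ‖v‖ := by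
          have := (fderiv ℝ F (γ t)).le_opNorm v
          rwa [Real.norm_eq_abs] at this
        calc ‖γ t‖ * |b t| ≤ ‖γ t‖ * (‖fderiv ℝ F (γ t)‖ * ‖v‖) :=
              mul_le_mul_of_nonneg_left h1 (norm_nonneg _)
          _ = (‖γ t‖ * ‖fderiv ℝ F (γ t)‖) * ‖v‖ := by ring
          _ ≤ (1/100) * ‖v‖ := mul_le_mul_of_nonneg_right hk2 (norm_nonneg v)
      have hcabs : ‖γ t‖^2 * |c2 t| ≤ (1/100) * ‖v‖^2 := by
        have h3 : ‖fderiv ℝ (fderiv ℝ F) (γ t) v‖ ≤ ‖fderiv ℝ (fderiv ℝ F) (γ t)‖ * ‖v‖ :=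
          (fderiv ℝ (fderiv ℝ F) (γ t)).le_opNorm v
        have h1 : |c2 t| ≤ ‖fderiv ℝ (fderiv ℝ F) (γ t)‖ * ‖v‖ * ‖v‖ := by
          have h2 := (fderiv ℝ (fderiv ℝ F) (γ t) v).le_opNorm v
          rw [Real.norm_eq_abs] at h2
          calc |c2 t| ≤ ‖fderiv ℝ (fderiv ℝ F) (γ t) v‖ * ‖v‖ := h2
            _ ≤ ‖fderiv ℝ (fderiv ℝ F) (γ t)‖ * ‖v‖ * ‖v‖ :=
                mul_le_mul_of_nonneg_right h3 (norm_nonneg v)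
        calc ‖γ t‖^2 * |c2 t| ≤ ‖γ t‖^2 * (‖fderiv ℝ (fderiv ℝ F) (γ t)‖ * ‖v‖ * ‖v‖) :=
              mul_le_mul_of_nonneg_left h1 (by positivity)
          _ = (‖γ t‖^2 * ‖fderiv ℝ (fderiv ℝ F) (γ t)‖) * (‖v‖ * ‖v‖) := by ring
          _ ≤ (1/100) * (‖v‖ * ‖v‖) := mul_le_mul_of_nonneg_right hk3 (by positivity)
          _ = (1/100) * ‖v‖^2 := by ring
      have hPB : |p t * b t| ≤ 2 * ((1/100) * ‖v‖ * ‖v‖) := by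
        rw [abs_mul]
        calc |p t| * |b t| ≤ (2 * (‖γ t‖ * ‖v‖)) * |b t| :=
              mul_le_mul_of_nonneg_right hpabs (abs_nonneg _)
          _ = 2 * ‖v‖ * (‖γ t‖ * |b t|) := by ring
          _ ≤ 2 * ‖v‖ * ((1/100) * ‖v‖) := mul_le_mul_of_nonneg_left hbabs (by positivity)
          _ = 2 * ((1/100) * ‖v‖ * ‖v‖) := by ring
      have hNC : |n t * c2 t| ≤ (1/100) * ‖v‖^2 := by
        rw [hnt, abs_mul, abs_of_nonneg (by positivity : (0:ℝ) ≤ ‖γ t‖^2)]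
        exact hcabs
      have h60 : 0 ≤ 6 * (n t * b t ^ 2) := by rw [hnt]; positivity
      obtain ⟨hPB1, hPB2⟩ := abs_le.mp hPB
      obtain ⟨hNC1, hNC2⟩ := abs_le.mp hNC
      have hY : 0 ≤ (⟪v, v⟫ + ⟪v, v⟫) * (f t)^2 - 4 * (p t * b t) * (f t)
          + 6 * (n t * b t ^ 2) - 2 * (n t * c2 t) * (f t) := by
        rw [hvv]
        exact StarBodyAux.arith ha1 ha0 hPB2 hNC2 h60
      have hD2eq : D2 t = ((⟪v, v⟫ + ⟪v, v⟫) * (f t)^2 - 4 * (p t * b t) * (f t)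
          + 6 * (n t * b t ^ 2) - 2 * (n t * c2 t) * (f t)) * ((f t)⁻¹)^4 := by
        have ha := hfne t ht
        simp only [hD2_def, inv_pow, Pi.mul_apply, Pi.inv_apply, Pi.pow_apply]
        field_simp
      rw [hD2eq]
      exact mul_nonneg hY (by positivity)
    have hγ0 : γ 0 = y1 := by simp [hγ_def]
    have hγ1 : γ 1 = y2 := by simp [hγ_def, hv_def]
    have hy1ne : y1 ≠ 0 := by
      have := hseg 0 ⟨le_refl 0, zero_le_one⟩; simpa using this
    have hy2ne : y2 ≠ 0 := by
      have := hseg 1 ⟨zero_le_one, le_refl 1⟩; simpa [hv_def] using this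
    have hends : ∀ y : EuclideanSpace ℝ (Fin d), y ∈ K → y ≠ 0 →
        ⟪y, y⟫ * ((F y)⁻¹ * (F y)⁻¹) ≤ 1 := by
      intro y hyK hyne
      have h1 : ‖y‖ ≤ F y := hval y hyK hyne
      have h2 : (99:ℝ)/100 ≤ F y := hFge y hyne
      rw [real_inner_self_eq_norm_sq]
      have h3 : ‖y‖^2 ≤ (F y)^2 := by nlinarith [norm_nonneg y]
      have h4 : (F y)⁻¹ * (F y)⁻¹ = ((F y)^2)⁻¹ := by
        rw [← mul_inv]; ring_nf
      rw [h4, ← div_eq_mul_inv]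
      exact (div_le_one (by positivity)).mpr h3
    have hcvx : ConvexOn ℝ (Set.Icc (0:ℝ) 1) g := by
      apply convexOn_of_deriv2_nonneg (convex_Icc 0 1)
      · intro t ht
        exact ((hgd t (hseg t ht)).differentiableAt.continuousAt).continuousWithinAt
      · rw [interior_Icc]
        intro t ht
        exact (hgd t (hseg t (Set.Ioo_subset_Icc_self ht))).differentiableAt.differentiableWithinAt
      · rw [interior_Icc]
        intro t ht
        have ht' := hseg t (Set.Ioo_subset_Icc_self ht)
        have hev : deriv g =ᶠ[𝓝 t] D1 := by
          filter_upwards [hSopen.mem_nhds ht'] with s hs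
          exact (hgd s hs).deriv
        exact (hev.differentiableAt_iff.mpr (hD1d t ht').differentiableAt).differentiableWithinAt
      · rw [interior_Icc]
        intro t ht
        have ht' := hseg t (Set.Ioo_subset_Icc_self ht)
        have hev : deriv g =ᶠ[𝓝 t] D1 := by
          filter_upwards [hSopen.mem_nhds ht'] with s hs
          exact (hgd s hs).deriv
        have h2 : deriv^[2] g t = D2 t := by
          have e1 : deriv^[2] g t = deriv (deriv g) t := rfl
          rw [e1, hev.deriv_eq, (hD1d t ht').deriv]
        rw [h2]
        exact hD2nonneg t ht'
    have h01 : (0:ℝ) ∈ Set.Icc (0:ℝ) 1 := ⟨le_refl 0, zero_le_one⟩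
    have h11 : (1:ℝ) ∈ Set.Icc (0:ℝ) 1 := ⟨zero_le_one, le_refl 1⟩
    have hgβ := hcvx.2 h01 h11 hα hβ hαβ
    have hsm : α • (0:ℝ) + β • (1:ℝ) = β := by simp
    rw [hsm] at hgβ
    simp only [smul_eq_mul] at hgβ
    have hg0 : g 0 ≤ 1 := by
      have := hends y1 hy1 hy1ne
      simp only [hg_def, hn_def, hf_def, hγ0]
      exact this
    have hg1 : g 1 ≤ 1 := by
      have := hends y2 hy2 hy2ne
      simp only [hg_def, hn_def, hf_def, hγ1]
      exact this
    have hgb1 : g β ≤ 1 := by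
      calc g β ≤ α * g 0 + β * g 1 := hgβ
        _ ≤ α * 1 + β * 1 :=
            add_le_add (mul_le_mul_of_nonneg_left hg0 hα) (mul_le_mul_of_nonneg_left hg1 hβ)
        _ = 1 := by linarith
    have hβ1 : β ≤ 1 := by linarith
    have hzb := hseg β ⟨hβ, hβ1⟩
    have hzeq : α • y1 + β • y2 = γ β := by
      simp only [hγ_def, hv_def, smul_sub]
      have hα' : α = 1 - β := by linarith
      rw [hα', sub_smul, one_smul]
      abel
    rw [hzeq]
    apply hmem (γ β) hzb
    have haz : (99:ℝ)/100 ≤ F (γ β) := hFge _ hzb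
    have hX : ‖γ β‖^2 * ((F (γ β))⁻¹ * (F (γ β))⁻¹) ≤ 1 := by
      have h5 := hgb1
      simp only [hg_def, hn_def, hf_def, real_inner_self_eq_norm_sq] at h5
      exact h5
    have hFz : (0:ℝ) < F (γ β) := lt_of_lt_of_le (by norm_num) haz
    have he : ‖γ β‖^2 = (‖γ β‖^2 * ((F (γ β))⁻¹ * (F (γ β))⁻¹)) * (F (γ β))^2 := by
      have h9 : ((F (γ β))⁻¹ * (F (γ β))⁻¹) * (F (γ β))^2 = 1 := by
        rw [← mul_inv, sq]
        exact inv_mul_cancel₀ (by positivity)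
      calc ‖γ β‖^2 = ‖γ β‖^2 * 1 := (mul_one _).symm
        _ = _ := by rw [← h9]; ring
    have h5 : ‖γ β‖^2 ≤ (F (γ β))^2 := by
      calc ‖γ β‖^2 = (‖γ β‖^2 * ((F (γ β))⁻¹ * (F (γ β))⁻¹)) * (F (γ β))^2 := he
        _ ≤ 1 * (F (γ β))^2 := mul_le_mul_of_nonneg_right hX (sq_nonneg _)
        _ = (F (γ β))^2 := one_mul _
    nlinarith [norm_nonneg (γ β), h5, haz]
  · -- degenerate case : origin on the segment
    push_neg at hseg
    obtain ⟨u, hu, huz⟩ := hseg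
    rcases eq_or_ne u 0 with rfl | hu0
    · have h1 : y1 = 0 := by simpa using huz
      have : α • y1 + β • y2 = β • y2 := by rw [h1, smul_zero, zero_add]
      rw [this]; exact hscale y2 hy2 β hβ (by linarith)
    rcases eq_or_ne u 1 with rfl | hu1
    · have h2 : y2 = 0 := by
        have : y1 + (y2 - y1) = 0 := by simpa using huz
        simpa using this
      have : α • y1 + β • y2 = α • y1 := by rw [h2, smul_zero, add_zero]
      rw [this]; exact hscale y1 hy1 α hα (by linarith)
    have hu0' : 0 < u := lt_of_le_of_ne hu.1 (Ne.symm hu0)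
    have hu1' : u < 1 := lt_of_le_of_ne hu.2 hu1
    -- y2 = k • y1 with k = (u-1)/u < 0
    have hy2' : y2 = ((u - 1)/u) • y1 := by
      have h1 : u • y2 = (u - 1) • y1 := by
        have : y1 + u • y2 - u • y1 = 0 := by rw [← huz]; rw [smul_sub]; abel
        have h2 : u • y2 = u • y1 - y1 := by
          apply eq_sub_of_add_eq; rw [← sub_eq_zero]; rw [← this]; abel
        rw [h2, sub_smul, one_smul]
      calc y2 = u⁻¹ • (u • y2) := by rw [inv_smul_smul₀ hu0'.ne']
        _ = ((u - 1)/u) • y1 := by rw [h1, smul_smul, div_eq_mul_inv, mul_comm]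
    rcases eq_or_ne y1 0 with rfl | hy1ne
    · have : y2 = 0 := by rw [hy2', smul_zero]
      rw [this, smul_zero, smul_zero, add_zero]; exact hK0
    set k : ℝ := (u - 1)/u with hk_def
    have hkneg : k < 0 := div_neg_of_neg_of_pos (by linarith) hu0'
    have hz : α • y1 + β • y2 = (α + β * k) • y1 := by
      rw [hy2', smul_smul, add_smul]
    rcases le_or_gt 0 (α + β * k) with hlam | hlam
    · rw [hz]
      refine hscale y1 hy1 _ hlam ?_
      nlinarith
    · have hy1' : y1 = k⁻¹ • y2 := by
        rw [hy2', smul_smul, inv_mul_cancel₀ hkneg.ne, one_smul]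
      have hz2 : α • y1 + β • y2 = ((α + β * k) * k⁻¹) • y2 := by
        rw [hz, hy1', smul_smul]
      rw [hz2]
      have hki : k⁻¹ < 0 := inv_lt_zero.mpr hkneg
      refine hscale y2 hy2 _ ?_ ?_
      · exact (mul_pos_of_neg_of_neg hlam hki).le
      · have he : (α + β * k) * k⁻¹ = α * k⁻¹ + β := by
          rw [add_mul, mul_assoc, mul_inv_cancel₀ hkneg.ne, mul_one]
        rw [he]
        have h8 : 0 ≤ α * -k⁻¹ := mul_nonneg hα (neg_nonneg.mpr hki.le)
        rw [mul_neg] at h8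
        linarith
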